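/- If H ⊆ Kⁿ is the common zero set of an ideal of K[X₁, …, Xₙ] and H is a subgroup of the additive group (Kⁿ, +), then H is a K-linear subspace of Kⁿ; that is, H is also closed under multiplication by every scalar of K. -/
import Mathlib


/-- Let `K` be an algebraically closed field of characteristic zero and let
`H ⊆ Kⁿ` be the common zero set of an ideal `I ⊆ K[X₁, …, Xₙ]`. If `H` is a subgroup of
the additive group `(Kⁿ, +)`, then `H` is a `K`-linear subspace of `Kⁿ`, i.e. `H` is also
closed under multiplication by every scalar of `K`. -/
theorem algebraic_subgroup_of_vector_group_is_linear {K : Type*} [Field K] [IsAlgClosed K]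
    [CharZero K] {n : ℕ} (I : Ideal (MvPolynomial (Fin n) K)) (H : Set (Fin n → K))
    (hH : H = {a : Fin n → K | ∀ f ∈ I, MvPolynomial.eval a f = 0})
    (h0 : (0 : Fin n → K) ∈ H)
    (hadd : ∀ a ∈ H, ∀ b ∈ H, a + b ∈ H)
    (hneg : ∀ a ∈ H, -a ∈ H) :
    ∀ c : K, ∀ a ∈ H, c • a ∈ H := by
  intro c a ha
  -- natural multiples of a are in H
  have hnat : ∀ m : ℕ, (m : K) • a ∈ H := by
    intro m
    induction m with
    | zero => simpa using h0
    | succ k ih =>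
      have := hadd _ ih _ ha
      simpa [add_smul, one_smul] using this
  subst hH
  intro f hf
  -- the one-variable polynomial t ↦ f(t • a)
  set p : Polynomial K :=
    MvPolynomial.aeval (fun i => Polynomial.C (a i) * Polynomial.X) f with hp
  have key : ∀ t : K, Polynomial.eval t p = MvPolynomial.eval (t • a) f := by
    intro t
    rw [hp, MvPolynomial.aeval_def,
      ← Polynomial.coe_evalRingHom,
      MvPolynomial.eval₂_comp_left (Polynomial.evalRingHom t)]
    rw [show MvPolynomial.eval (t • a) = MvPolynomial.eval₂ (RingHom.id K) (t • a) from rfl]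
    have h1 : (Polynomial.evalRingHom t).comp (algebraMap K (Polynomial K)) = RingHom.id K := by
      ext x; simp
    have h2 : (⇑(Polynomial.evalRingHom t) ∘ fun i => Polynomial.C (a i) * Polynomial.X)
        = t • a := by
      funext i; simp; exact mul_comm _ _
    rw [h1, h2]
  have hroots : {x : K | Polynomial.IsRoot p x}.Infinite := by
    apply Set.infinite_of_injective_forall_mem (f := fun m : ℕ => (m : K))
    · exact Nat.cast_injective
    · intro m
      have := hnat m f hf
      simpa [Polynomial.IsRoot, key] using this
  have hp0 : p = 0 := Polynomial.eq_zero_of_infinite_isRoot p hroots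
  have := key c
  rw [hp0] at this
  simpa using this.symm
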